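/- arXiv:2604.12233 — 3 statements merged into one kernel-verified Lean document; each statement's English description precedes it below -/
import Mathlib

section
/- Let v ∈ ℝ^n with ‖v‖₂ = 1, let q be uniformly distributed over vectors in {0,1}^n with exactly d ones (1 ≤ d ≤ n, n ≥ 2), let p = d/n, and let f(q) = ⟨q, v⟩ with μ = E f(q). Then Var f(q) = p(1−p)·(1 − (μ²/p² − 1)/(n−1)). -/
open Finset

lemma count_subset {α : Type*} [DecidableEq α] (u t : Finset α) (ht : t ⊆ u) {d : ℕ}
    (htd : t.card ≤ d) :
    ((u.powersetCard d).filter (fun s => t ⊆ s)).card = (u.card - t.card).choose (d - t.card) := by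
  have : ((u.powersetCard d).filter (fun s => t ⊆ s)).card
      = ((u \ t).powersetCard (d - t.card)).card := by
    apply Finset.card_nbij' (fun s => s \ t) (fun w => w ∪ t)
    · intro s hs
      simp only [Finset.mem_coe, mem_filter, Finset.mem_powersetCard] at hs ⊢
      exact ⟨sdiff_subset_sdiff hs.1.1 (Finset.Subset.refl t),
        by rw [card_sdiff_of_subset hs.2, hs.1.2]⟩
    · intro w hw
      simp only [Finset.mem_coe, Finset.mem_powersetCard] at hw
      have hdisj : Disjoint w t := Finset.disjoint_of_subset_left hw.1 (Finset.sdiff_disjoint)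
      simp only [Finset.mem_coe, mem_filter, Finset.mem_powersetCard]
      refine ⟨⟨Finset.union_subset (hw.1.trans (Finset.sdiff_subset)) ht, ?_⟩,
        Finset.subset_union_right⟩
      rw [Finset.card_union_of_disjoint hdisj, hw.2]
      omega
    · intro s hs
      simp only [Finset.mem_coe, mem_filter] at hs
      exact Finset.sdiff_union_of_subset hs.2
    · intro w hw
      simp only [Finset.mem_coe, Finset.mem_powersetCard] at hw
      exact Finset.union_sdiff_cancel_right
        (Finset.disjoint_of_subset_left hw.1 (Finset.sdiff_disjoint))
  rw [this, Finset.card_powersetCard, Finset.card_sdiff_of_subset ht]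

lemma stmt5_alg (x y N S : ℝ) (hx : x ≠ 0) (hy : y ≠ 0) (hy1 : y - 1 ≠ 0) (hN : N ≠ 0) :
    ((N*(x*(x-1))/(y*(y-1)) * S^2 + (N*x/y - N*(x*(x-1))/(y*(y-1)))) - 2*(N*x/y*S/N)*(N*x/y*S) + N*(N*x/y*S/N)^2)/N
    = x/y * (1 - x/y) * (1 - ((N*x/y*S/N)^2/(x/y)^2 - 1)/(y-1)) := by
  field_simp
  ring

theorem stmt5 {n d : ℕ} (hd1 : 1 ≤ d) (hdn : d ≤ n) (hn : 2 ≤ n)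
    (v : Fin n → ℝ) (hv : ∑ i, v i ^ 2 = 1) :
    let Ω := {s : Finset (Fin n) // s.card = d}
    let p : ℝ := (d:ℝ) / n
    let f : Ω → ℝ := fun s => ∑ i, (if i ∈ s.1 then v i else 0)
    let μ : ℝ := (∑ s : Ω, f s) / (Fintype.card Ω : ℝ)
    (∑ s : Ω, (f s - μ)^2) / (Fintype.card Ω : ℝ)
      = p * (1 - p) * (1 - (μ^2 / p^2 - 1) / ((n:ℝ) - 1)) := by
  intro Ω p f μ
  classical
  set P : Finset (Finset (Fin n)) := Finset.univ.powersetCard d with hP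
  -- cardinality of Ω
  have hcard : Fintype.card Ω = n.choose d := by
    rw [Fintype.card_subtype]
    have : Finset.univ.filter (fun s : Finset (Fin n) => s.card = d) = P := by
      rw [hP, Finset.powersetCard_eq_filter, Finset.powerset_univ]
    rw [this, hP, Finset.card_powersetCard, Finset.card_univ, Fintype.card_fin]
  -- sums over Ω equal sums over P
  have hsum : ∀ g : Finset (Fin n) → ℝ, ∑ s : Ω, g s.1 = ∑ s ∈ P, g s := by
    intro g
    exact (Finset.sum_subtype P (fun s => Finset.mem_powersetCard_univ) g).symm
  set S : ℝ := ∑ i, v i with hS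
  set N : ℝ := (n.choose d : ℝ) with hN
  have hNpos : 0 < N := by
    rw [hN]; exact_mod_cast Nat.choose_pos hdn
  set A : ℝ := ((n-1).choose (d-1) : ℝ) with hA
  set B : ℝ := (if 2 ≤ d then ((n-2).choose (d-2) : ℝ) else 0) with hB
  -- counting lemmas
  have hcount1 : ∀ i : Fin n, ((P.filter (fun s => i ∈ s)).card : ℝ) = A := by
    intro i
    have : P.filter (fun s => i ∈ s) = P.filter (fun s => ({i} : Finset (Fin n)) ⊆ s) := by
      apply Finset.filter_congr; intro s _; simp
    rw [this, hP]
    rw [count_subset Finset.univ {i} (Finset.subset_univ _) (by simpa using hd1)]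
    simp [hA, Finset.card_univ]
  have hcount2 : ∀ i j : Fin n, i ≠ j → ((P.filter (fun s => i ∈ s ∧ j ∈ s)).card : ℝ) = B := by
    intro i j hij
    have hfeq : P.filter (fun s => i ∈ s ∧ j ∈ s)
        = P.filter (fun s => ({i, j} : Finset (Fin n)) ⊆ s) := by
      apply Finset.filter_congr; intro s _
      simp [Finset.insert_subset_iff]
    have hcard2 : ({i, j} : Finset (Fin n)).card = 2 := by
      rw [Finset.card_insert_of_notMem (by simpa using hij), Finset.card_singleton]
    by_cases h2 : 2 ≤ d
    · rw [hfeq, hP, count_subset Finset.univ {i,j} (Finset.subset_univ _) (by omega)]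
      simp [hB, h2, hcard2, Finset.card_univ]
    · have hd : d = 1 := by omega
      have : P.filter (fun s => ({i, j} : Finset (Fin n)) ⊆ s) = ∅ := by
        apply Finset.filter_false_of_mem
        intro s hs hsub
        have := Finset.card_le_card hsub
        rw [hcard2] at this
        rw [hP, Finset.mem_powersetCard_univ] at hs
        omega
      rw [hfeq, this]
      simp [hB, h2]
  -- first moment
  have hT1 : ∑ s ∈ P, (∑ i, (if i ∈ s then v i else 0)) = A * S := by
    rw [Finset.sum_comm]
    have : ∀ i : Fin n, ∑ s ∈ P, (if i ∈ s then v i else 0)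
        = ((P.filter (fun s => i ∈ s)).card : ℝ) * v i := by
      intro i
      rw [← Finset.sum_filter, Finset.sum_const, nsmul_eq_mul]
    simp_rw [this, hcount1]
    rw [hS, ← Finset.mul_sum]
  -- second moment
  have hT2 : ∑ s ∈ P, (∑ i, (if i ∈ s then v i else 0))^2 = B * S^2 + (A - B) := by
    have step1 : ∀ s : Finset (Fin n), (∑ i, (if i ∈ s then v i else 0))^2
        = ∑ i, ∑ j, (if i ∈ s ∧ j ∈ s then v i * v j else 0) := by
      intro s
      rw [sq, Finset.sum_mul_sum]
      apply Finset.sum_congr rfl; intro i _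
      apply Finset.sum_congr rfl; intro j _
      by_cases hi : i ∈ s <;> by_cases hj : j ∈ s <;> simp [hi, hj]
    simp_rw [step1]
    rw [Finset.sum_comm]
    have swap2 : ∀ i : Fin n, ∑ s ∈ P, ∑ j, (if i ∈ s ∧ j ∈ s then v i * v j else 0)
        = ∑ j, ∑ s ∈ P, (if i ∈ s ∧ j ∈ s then v i * v j else 0) := fun i => Finset.sum_comm
    simp_rw [swap2]
    have inner : ∀ i j : Fin n, ∑ s ∈ P, (if i ∈ s ∧ j ∈ s then v i * v j else 0)
        = ((P.filter (fun s => i ∈ s ∧ j ∈ s)).card : ℝ) * (v i * v j) := by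
      intro i j
      rw [← Finset.sum_filter, Finset.sum_const, nsmul_eq_mul]
    simp_rw [inner]
    have coeff : ∀ i j : Fin n, ((P.filter (fun s => i ∈ s ∧ j ∈ s)).card : ℝ)
        = B + (if i = j then A - B else 0) := by
      intro i j
      by_cases hij : i = j
      · subst hij
        have : P.filter (fun s => i ∈ s ∧ i ∈ s) = P.filter (fun s => i ∈ s) := by
          apply Finset.filter_congr; intro s _; tauto
        rw [this, hcount1, if_pos rfl]; ring
      · rw [hcount2 i j hij, if_neg hij]; ring
    simp_rw [coeff, add_mul, Finset.sum_add_distrib, ite_mul, zero_mul]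
    have diag : ∀ i : Fin n, (∑ j, if i = j then (A - B) * (v i * v j) else 0)
        = (A - B) * v i ^ 2 := by
      intro i
      rw [Finset.sum_ite_eq, if_pos (Finset.mem_univ i)]; ring
    simp_rw [diag]
    have offd : (∑ i : Fin n, ∑ j : Fin n, B * (v i * v j)) = B * S ^ 2 := by
      rw [hS, sq, Finset.sum_mul_sum, Finset.mul_sum]
      exact Finset.sum_congr rfl fun i _ => (Finset.mul_sum _ _ _).symm
    have diagsum : (∑ i : Fin n, (A - B) * v i ^ 2) = A - B := by
      rw [← Finset.mul_sum, hv, mul_one]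
    rw [offd, diagsum]
  -- choose identities
  have hid1 : A * n = N * d := by
    have h := Nat.add_one_mul_choose_eq (n-1) (d-1)
    have hn1 : n-1+1 = n := by omega
    have hd1' : d-1+1 = d := by omega
    rw [hn1, hd1'] at h
    have h' : ((n-1).choose (d-1)) * n = n.choose d * d := by rw [mul_comm]; exact h
    rw [hA, hN]
    exact_mod_cast h' 
  have hid2 : B * (n * (n-1)) = N * (d * (d-1)) := by
    by_cases h2 : 2 ≤ d
    · have h1 := Nat.add_one_mul_choose_eq (n-1) (d-1)
      have hn1 : n-1+1 = n := by omega
      have hd1' : d-1+1 = d := by omega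
      rw [hn1, hd1'] at h1
      have h2' := Nat.add_one_mul_choose_eq (n-2) (d-2)
      have hn2 : n-2+1 = n-1 := by omega
      have hd2' : d-2+1 = d-1 := by omega
      rw [hn2, hd2'] at h2'
      -- h1 : n * choose (n-1) (d-1) = choose n d * d
      -- h2' : (n-1) * choose (n-2) (d-2) = choose (n-1) (d-1) * (d-1)
      have key : (n*(n-1)) * ((n-2).choose (d-2)) = n.choose d * (d * (d-1)) := by
        calc (n*(n-1)) * ((n-2).choose (d-2)) = n * ((n-1) * (n-2).choose (d-2)) := by ring
        _ = n * ((n-1).choose (d-1) * (d-1)) := by rw [h2']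
        _ = (n * (n-1).choose (d-1)) * (d-1) := by ring
        _ = (n.choose d * d) * (d-1) := by rw [h1]
        _ = n.choose d * (d * (d-1)) := by ring
      have keyR : ((n:ℝ)*((n:ℝ)-1)) * (((n-2).choose (d-2) : ℕ) : ℝ)
          = (n.choose d : ℝ) * ((d:ℝ) * ((d:ℝ)-1)) := by
        have c1 : ((n-1 : ℕ) : ℝ) = (n:ℝ) - 1 := by
          have : (1:ℕ) ≤ n := by omega
          push_cast [this]; ring
        have c2 : ((d-1 : ℕ) : ℝ) = (d:ℝ) - 1 := by
          push_cast [hd1]; ring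
        have := congrArg (fun x : ℕ => (x : ℝ)) key
        push_cast at this
        rw [c1, c2] at this
        convert this using 1 <;> push_cast <;> ring
      rw [hB, if_pos h2, hN]
      linarith [keyR]
    · have hd : d = 1 := by omega
      rw [hB, if_neg h2, hd]
      push_cast
      ring
  -- now reduce the goal
  have hμ : μ = A * S / N := by
    show (∑ s : Ω, f s) / (Fintype.card Ω : ℝ) = A * S / N
    have : ∑ s : Ω, f s = ∑ s ∈ P, (∑ i, (if i ∈ s then v i else 0)) :=
      hsum (fun s => ∑ i, (if i ∈ s then v i else 0))
    rw [this, hT1, hcard, hN]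
  have hvar : ∑ s : Ω, (f s - μ)^2
      = (B * S^2 + (A - B)) - 2 * μ * (A * S) + N * μ^2 := by
    have expand : ∀ s : Ω, (f s - μ)^2 = f s ^ 2 - 2 * μ * f s + μ^2 := by
      intro s; ring
    simp_rw [expand]
    rw [Finset.sum_add_distrib, Finset.sum_sub_distrib, Finset.sum_const, nsmul_eq_mul]
    have e1 : ∑ s : Ω, f s ^ 2 = ∑ s ∈ P, (∑ i, (if i ∈ s then v i else 0))^2 :=
      hsum (fun s => (∑ i, (if i ∈ s then v i else 0))^2)
    have e2 : ∑ s : Ω, 2 * μ * f s = 2 * μ * ∑ s ∈ P, (∑ i, (if i ∈ s then v i else 0)) := by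
      rw [Finset.mul_sum]
      exact hsum (fun s => 2 * μ * (∑ i, (if i ∈ s then v i else 0)))
    rw [e1, hT2, e2, hT1, Finset.card_univ, hcard, ← hN]
  rw [hvar, hcard, ← hN]
  -- pure algebra now
  have hn0 : (n:ℝ) ≠ 0 := by positivity
  have hn1 : (n:ℝ) - 1 ≠ 0 := by
    have : (2:ℝ) ≤ n := by exact_mod_cast hn
    linarith
  have hd0 : (d:ℝ) ≠ 0 := by
    have : (1:ℝ) ≤ d := by exact_mod_cast hd1
    linarith
  have hp0 : p ≠ 0 := by
    show (d:ℝ)/n ≠ 0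
    exact div_ne_zero hd0 hn0
  have hN0 : N ≠ 0 := ne_of_gt hNpos
  have hA' : A = N * (d:ℝ) / n := by
    field_simp
    linarith [hid1]
  have hB' : B = N * ((d:ℝ) * ((d:ℝ)-1)) / ((n:ℝ) * ((n:ℝ)-1)) := by
    rw [eq_div_iff (by exact mul_ne_zero hn0 hn1)]
    exact hid2
  rw [hμ, hA', hB']
  exact stmt5_alg (d:ℝ) (n:ℝ) N S hd0 hn0 hn1 hN0
end

section
/- Let M be a random matrix whose rows X_1^T, …, X_n^T are i.i.d. uniform over 0/1 vectors in ℝ^n with exactly d ones (1 ≤ d ≤ n). Let H_1 = span{X_2,…,X_n} and let f_1 be any unit vector orthogonal to H_1 (measurable with respect to X_2,…,X_n). Then E[⟨X_1, f_1⟩² | X_2,…,X_n] = (d/n)·(n−d)/(n−1) + (d(d−1)/(n(n−1)))·(Σ_{k=1}^n f_1(k))². -/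
open Finset

lemma count_sub {n d : ℕ} (A : Finset (Fin n)) (h : A.card ≤ d) :
    ((Finset.powersetCard d (Finset.univ : Finset (Fin n))).filter (fun s => A ⊆ s)).card
      = (n - A.card).choose (d - A.card) := by
  have hcardsd : (Finset.univ \ A : Finset (Fin n)).card = n - A.card := by
    rw [Finset.card_sdiff_of_subset (Finset.subset_univ A), Finset.card_univ, Fintype.card_fin]
  rw [← hcardsd, ← Finset.card_powersetCard]
  apply Finset.card_nbij' (fun s => s \ A) (fun t => t ∪ A)
  · intro s hs
    simp only [Finset.mem_coe, Finset.mem_filter, Finset.mem_powersetCard] at hs ⊢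
    obtain ⟨⟨_, hcard⟩, hA⟩ := hs
    constructor
    · intro x hx
      simp only [Finset.mem_sdiff] at hx ⊢
      exact ⟨Finset.mem_univ x, hx.2⟩
    · rw [Finset.card_sdiff_of_subset hA, hcard]
  · intro t ht
    simp only [Finset.mem_coe, Finset.mem_filter, Finset.mem_powersetCard] at ht ⊢
    obtain ⟨hsub, hcard⟩ := ht
    have hdisj : Disjoint t A := by
      intro u hu1 hu2 x hx
      have := hsub (hu1 hx)
      simp only [Finset.mem_sdiff] at this
      exact absurd (hu2 hx) this.2
    refine ⟨⟨Finset.subset_univ _, ?_⟩, Finset.subset_union_right⟩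
    rw [Finset.card_union_of_disjoint hdisj, hcard]
    omega
  · intro s hs
    simp only [Finset.mem_coe, Finset.mem_filter] at hs
    exact Finset.sdiff_union_of_subset hs.2
  · intro t ht
    simp only [Finset.mem_coe, Finset.mem_powersetCard] at ht
    have hdisj : Disjoint t A := by
      intro u hu1 hu2 x hx
      have := ht.1 (hu1 hx)
      simp only [Finset.mem_sdiff] at this
      exact absurd (hu2 hx) this.2
    exact Finset.union_sdiff_cancel_right hdisj

theorem stmt13 {n d : ℕ} (hd1 : 1 ≤ d) (hdn : d ≤ n) (hn : 2 ≤ n)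
    (f : Fin n → ℝ) (hf : ∑ k, f k ^ 2 = 1) :
    (∑ s : {s : Finset (Fin n) // s.card = d},
        (∑ k, (if k ∈ s.1 then (1:ℝ) else 0) * f k)^2) /
      (Fintype.card {s : Finset (Fin n) // s.card = d} : ℝ)
      = ((d:ℝ) / n) * (((n:ℝ) - d) / ((n:ℝ) - 1))
        + ((d:ℝ) * ((d:ℝ) - 1) / ((n:ℝ) * ((n:ℝ) - 1))) * (∑ k, f k)^2 := by
  -- counts
  set P : Finset (Finset (Fin n)) := Finset.powersetCard d (Finset.univ : Finset (Fin n)) with hP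
  have hc1 : ∀ k : Fin n, (P.filter (fun s => k ∈ s)).card = (n-1).choose (d-1) := by
    intro k
    have := count_sub ({k} : Finset (Fin n)) (by simpa using hd1)
    simpa [Finset.singleton_subset_iff] using this
  have hc2 : ∀ k l : Fin n, k ≠ l →
      ((P.filter (fun s => k ∈ s ∧ l ∈ s)).card : ℝ) * (n * (n-1))
        = (d * (d-1)) * (n.choose d : ℝ) := by
    intro k l hkl
    rcases Nat.lt_or_ge d 2 with hd2 | hd2
    · interval_cases d
      have : (P.filter (fun s => k ∈ s ∧ l ∈ s)) = ∅ := by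
        apply Finset.filter_false_of_mem
        intro s hs ⟨hk, hl⟩
        simp only [hP, Finset.mem_powersetCard] at hs
        have := Finset.card_le_card (Finset.insert_subset hk (Finset.singleton_subset_iff.2 hl))
        rw [Finset.card_insert_of_notMem (by simpa using hkl), Finset.card_singleton, hs.2] at this
        omega
      simp [this]
    · have hA : ({k, l} : Finset (Fin n)).card = 2 := by
        rw [Finset.card_insert_of_notMem (by simpa using hkl), Finset.card_singleton]
      have hcount := count_sub (d := d) ({k, l} : Finset (Fin n)) (by rw [hA]; exact hd2)
      rw [hA] at hcount
      have heq : (P.filter (fun s => k ∈ s ∧ l ∈ s)) = (P.filter (fun s => ({k,l} : Finset (Fin n)) ⊆ s)) := by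
        apply Finset.filter_congr
        intro s _
        simp [Finset.insert_subset_iff]
      rw [heq, hcount]
      -- natural number identity: (n-2).choose (d-2) * n * (n-1) = d * (d-1) * n.choose d
      have hnat : (n-2).choose (d-2) * (n * (n-1)) = (d * (d-1)) * n.choose d := by
        have h1 : (n-1) * (n-2).choose (d-2) = (n-1).choose (d-1) * (d-1) := by
          have := Nat.add_one_mul_choose_eq (n-2) (d-2)
          have e1 : (n-2) + 1 = n - 1 := by omega
          have e2 : (d-2) + 1 = d - 1 := by omega
          rw [e1, e2] at this
          exact this
        have h2 : n * (n-1).choose (d-1) = n.choose d * d := by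
          have := Nat.add_one_mul_choose_eq (n-1) (d-1)
          have e1 : (n-1) + 1 = n := by omega
          have e2 : (d-1) + 1 = d := by omega
          rw [e1, e2] at this
          exact this
        calc (n-2).choose (d-2) * (n * (n-1)) = n * ((n-1) * (n-2).choose (d-2)) := by ring
        _ = n * ((n-1).choose (d-1) * (d-1)) := by rw [h1]
        _ = (n * (n-1).choose (d-1)) * (d-1) := by ring
        _ = (n.choose d * d) * (d-1) := by rw [h2]
        _ = (d * (d-1)) * n.choose d := by ring
      have := congrArg (fun m : ℕ => (m : ℝ)) hnat
      push_cast at this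
      rw [Nat.cast_sub (by omega), Nat.cast_sub hd1] at this
      push_cast at this
      linarith [this]
  have hc1' : ∀ k : Fin n, ((P.filter (fun s => k ∈ s)).card : ℝ) * n = d * (n.choose d : ℝ) := by
    intro k
    rw [hc1 k]
    have h2 : n * (n-1).choose (d-1) = n.choose d * d := by
      have := Nat.add_one_mul_choose_eq (n-1) (d-1)
      have e1 : (n-1) + 1 = n := by omega
      have e2 : (d-1) + 1 = d := by omega
      rw [e1, e2] at this
      exact this
    have := congrArg (fun m : ℕ => (m : ℝ)) h2
    push_cast at this
    linarith [this]
  -- rewrite sum over subtype as sum over P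
  have hsum : (∑ s : {s : Finset (Fin n) // s.card = d},
        (∑ k, (if k ∈ s.1 then (1:ℝ) else 0) * f k)^2)
      = ∑ s ∈ P, (∑ k, (if k ∈ s then (1:ℝ) else 0) * f k)^2 := by
    exact (Finset.sum_subtype P (fun s => by simp [hP, Finset.mem_powersetCard])
      (fun s => (∑ k, (if k ∈ s then (1:ℝ) else 0) * f k)^2)).symm
  have hcard : (Fintype.card {s : Finset (Fin n) // s.card = d} : ℝ) = (n.choose d : ℝ) := by
    rw [Fintype.card_finset_len, Fintype.card_fin]
  rw [hsum, hcard]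
  have hC : (0:ℝ) < (n.choose d : ℝ) := by
    exact_mod_cast Nat.choose_pos hdn
  have hn0 : (0:ℝ) < (n:ℝ) := by positivity
  have hn1 : (0:ℝ) < (n:ℝ) - 1 := by
    have : (2:ℝ) ≤ (n:ℝ) := by exact_mod_cast hn
    linarith
  set C : ℝ := (n.choose d : ℝ) with hCdef
  set c1R : ℝ := (d:ℝ) * C / n with hc1Rdef
  set cpR : ℝ := (d:ℝ) * ((d:ℝ)-1) * C / ((n:ℝ) * ((n:ℝ)-1)) with hcpRdef
  have hc1v : ∀ k : Fin n, ((P.filter (fun s => k ∈ s)).card : ℝ) = c1R := by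
    intro k
    rw [hc1Rdef, eq_div_iff (by positivity)]
    exact hc1' k
  have hc2v : ∀ k l : Fin n, k ≠ l →
      ((P.filter (fun s => k ∈ s ∧ l ∈ s)).card : ℝ) = cpR := by
    intro k l hkl
    rw [hcpRdef, eq_div_iff (by positivity)]
    have := hc2 k l hkl
    push_cast at this ⊢
    linarith [this]
  -- expand the square
  have hexp : ∑ s ∈ P, (∑ k, (if k ∈ s then (1:ℝ) else 0) * f k)^2
      = ∑ k, ∑ l, (f k * f l) * ((P.filter (fun s => k ∈ s ∧ l ∈ s)).card : ℝ) := by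
    have h1 : ∀ s ∈ P, (∑ k, (if k ∈ s then (1:ℝ) else 0) * f k)^2
        = ∑ k, ∑ l, (f k * f l) * (if k ∈ s ∧ l ∈ s then (1:ℝ) else 0) := by
      intro s _
      rw [sq, Finset.sum_mul_sum]
      apply Finset.sum_congr rfl; intro k _
      apply Finset.sum_congr rfl; intro l _
      by_cases hk : k ∈ s <;> by_cases hl : l ∈ s <;> simp [hk, hl]
    rw [Finset.sum_congr rfl h1, Finset.sum_comm]
    apply Finset.sum_congr rfl; intro k _
    rw [Finset.sum_comm]
    apply Finset.sum_congr rfl; intro l _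
    rw [← Finset.mul_sum, Finset.sum_boole]
  rw [hexp]
  have hsplit : ∑ k, ∑ l, (f k * f l) * ((P.filter (fun s => k ∈ s ∧ l ∈ s)).card : ℝ)
      = cpR * (∑ k, f k)^2 + (c1R - cpR) := by
    have h1 : ∀ k : Fin n, ∑ l, (f k * f l) * ((P.filter (fun s => k ∈ s ∧ l ∈ s)).card : ℝ)
        = (∑ l, f k * f l * cpR) + f k * f k * (c1R - cpR) := by
      intro k
      have : ∀ l : Fin n, (f k * f l) * ((P.filter (fun s => k ∈ s ∧ l ∈ s)).card : ℝ)
          = f k * f l * cpR + (if l = k then f k * f k * (c1R - cpR) else 0) := by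
        intro l
        by_cases hlk : l = k
        · subst hlk
          have : (P.filter (fun s => l ∈ s ∧ l ∈ s)) = (P.filter (fun s => l ∈ s)) := by
            apply Finset.filter_congr; intro s _; simp
          rw [this, hc1v l]
          simp
          ring
        · rw [hc2v k l (fun h => hlk h.symm)]
          simp [hlk]
      rw [Finset.sum_congr rfl (fun l _ => this l), Finset.sum_add_distrib,
        Finset.sum_ite_eq' Finset.univ k (fun _ => f k * f k * (c1R - cpR))]
      simp
    rw [Finset.sum_congr rfl (fun k _ => h1 k), Finset.sum_add_distrib]
    have h2 : ∑ k : Fin n, ∑ l : Fin n, f k * f l * cpR = cpR * (∑ k, f k)^2 := by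
      rw [sq, Finset.sum_mul_sum]
      rw [Finset.mul_sum]
      apply Finset.sum_congr rfl; intro k _
      rw [Finset.mul_sum]
      apply Finset.sum_congr rfl; intro l _
      ring
    have h3 : ∑ k : Fin n, f k * f k * (c1R - cpR) = (c1R - cpR) := by
      rw [← Finset.sum_mul]
      have : ∑ k : Fin n, f k * f k = 1 := by
        rw [← hf]; apply Finset.sum_congr rfl; intro k _; ring
      rw [this, one_mul]
    rw [h2, h3]
  rw [hsplit]
  rw [hc1Rdef, hcpRdef]
  have hd0 : (0:ℝ) ≤ (d:ℝ) := by positivity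
  field_simp
  ring
end

section
/- Let δ, ρ ∈ (0,1) and let v ∈ S^{n−1} be a unit vector that is not (δ, ρ)-almost constant, meaning: for every λ ∈ ℝ, the number of coordinates i with |v_i − λ| ≤ ρ/√n is less than (1−δ)n. Let D(v) ∈ ℝ^{n(n−1)/2} be the vector with coordinates v_i − v_j for i < j. Then ‖D(v)‖₂ ≥ δρ√n/(4√2). -/
theorem stmt18 {n : ℕ} (δ ρ : ℝ) (hδ : δ ∈ Set.Ioo (0:ℝ) 1) (hρ : ρ ∈ Set.Ioo (0:ℝ) 1)
    (v : EuclideanSpace ℝ (Fin n)) (hv : ‖v‖ = 1)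
    (hcons : ∀ lam : ℝ,
      ((Finset.univ.filter (fun i : Fin n => |v i - lam| ≤ ρ / Real.sqrt n)).card : ℝ)
        < (1 - δ) * n) :
    δ * ρ * Real.sqrt n / (4 * Real.sqrt 2)
      ≤ Real.sqrt (∑ p ∈ Finset.univ.filter (fun p : Fin n × Fin n => p.1 < p.2),
          (v p.1 - v p.2)^2) := by
  classical
  obtain ⟨hδ0, hδ1⟩ := hδ
  obtain ⟨hρ0, hρ1⟩ := hρ
  rcases Nat.eq_zero_or_pos n with hn0 | hn
  · subst hn0
    have := hcons 0
    simp at this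
  have hnR : (0:ℝ) < n := by exact_mod_cast hn
  set μ : ℝ := (∑ i, v i) / n with hμ
  set T : ℝ := ∑ i, (v i - μ)^2 with hT
  have hsqrtn : (0:ℝ) < Real.sqrt n := Real.sqrt_pos.2 hnR
  set A := Finset.univ.filter (fun i : Fin n => |v i - μ| ≤ ρ / Real.sqrt n) with hA
  set B := Finset.univ.filter (fun i : Fin n => ¬ (|v i - μ| ≤ ρ / Real.sqrt n)) with hB
  have hcard : A.card + B.card = n := by
    rw [hA, hB, Finset.card_filter_add_card_filter_not, Finset.card_univ, Fintype.card_fin]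
  have hAlt := hcons μ
  have hBgt : δ * n < (B.card : ℝ) := by
    have hc : (A.card : ℝ) + B.card = n := by exact_mod_cast hcard
    nlinarith
  have hTB : (B.card : ℝ) * (ρ^2 / n) ≤ T := by
    calc (B.card : ℝ) * (ρ^2 / n) = ∑ _i ∈ B, (ρ^2 / n) := by
          rw [Finset.sum_const, nsmul_eq_mul]
    _ ≤ ∑ i ∈ B, (v i - μ)^2 := by
        apply Finset.sum_le_sum
        intro i hi
        rw [hB, Finset.mem_filter] at hi
        have h1 : ρ / Real.sqrt n < |v i - μ| := lt_of_not_ge hi.2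
        have hnn : (0:ℝ) ≤ ρ / Real.sqrt n := div_nonneg hρ0.le hsqrtn.le
        have h2 : (ρ / Real.sqrt n)^2 ≤ (v i - μ)^2 := by
          have hs := sq_abs (v i - μ)
          nlinarith [abs_nonneg (v i - μ)]
        calc ρ^2 / n = (ρ / Real.sqrt n)^2 := by
              rw [div_pow, Real.sq_sqrt hnR.le]
        _ ≤ _ := h2
    _ ≤ T := by
        rw [hT]
        apply Finset.sum_le_sum_of_subset_of_nonneg (Finset.filter_subset _ _)
        intros; positivity
  have hTlb : δ * ρ^2 < T := by
    have hpos : 0 < ρ^2 / n := by positivity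
    calc δ * ρ^2 = (δ * n) * (ρ^2 / n) := by field_simp
    _ < (B.card : ℝ) * (ρ^2 / n) := mul_lt_mul_of_pos_right hBgt hpos
    _ ≤ T := hTB
  -- the identity: the sum over pairs equals n * T
  set S : ℝ := ∑ p ∈ Finset.univ.filter (fun p : Fin n × Fin n => p.1 < p.2),
      (v p.1 - v p.2)^2 with hS
  have hswap : ∑ p ∈ Finset.univ.filter (fun p : Fin n × Fin n => p.2 < p.1),
      (v p.1 - v p.2)^2 = S := by
    rw [hS]
    apply Finset.sum_equiv (Equiv.prodComm (Fin n) (Fin n))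
    · intro p
      simp [Finset.mem_filter]
    · intro p _
      simp [Equiv.prodComm]
      ring
  have hfull : ∑ p ∈ (Finset.univ : Finset (Fin n × Fin n)), (v p.1 - v p.2)^2 = 2 * S := by
    rw [← Finset.sum_filter_add_sum_filter_not Finset.univ
        (fun p : Fin n × Fin n => p.1 < p.2)]
    have hsplit2 : ∑ p ∈ Finset.univ.filter (fun p : Fin n × Fin n => ¬ p.1 < p.2),
        (v p.1 - v p.2)^2 = S := by
      rw [← Finset.sum_filter_add_sum_filter_not
          (Finset.univ.filter (fun p : Fin n × Fin n => ¬ p.1 < p.2))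
          (fun p : Fin n × Fin n => p.2 < p.1)]
      have h1 : (Finset.univ.filter (fun p : Fin n × Fin n => ¬ p.1 < p.2)).filter
          (fun p => p.2 < p.1) = Finset.univ.filter (fun p : Fin n × Fin n => p.2 < p.1) := by
        rw [Finset.filter_filter]
        apply Finset.filter_congr
        intro p _
        constructor
        · rintro ⟨_, h⟩; exact h
        · intro h; exact ⟨not_lt_of_gt h, h⟩
      have h2 : ∑ p ∈ (Finset.univ.filter (fun p : Fin n × Fin n => ¬ p.1 < p.2)).filter
          (fun p => ¬ p.2 < p.1), (v p.1 - v p.2)^2 = 0 := by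
        apply Finset.sum_eq_zero
        intro p hp
        simp only [Finset.mem_filter] at hp
        have : p.1 = p.2 := le_antisymm (not_lt.1 hp.2) (not_lt.1 hp.1.2)
        rw [this]; ring
      rw [h1, h2, hswap, add_zero]
    rw [hsplit2]
    ring
  have hexp : ∑ p ∈ (Finset.univ : Finset (Fin n × Fin n)), (v p.1 - v p.2)^2
      = 2 * n * (∑ i, (v i)^2) - 2 * (∑ i, v i)^2 := by
    rw [← Finset.univ_product_univ, Finset.sum_product]
    have hrow : ∀ i : Fin n, ∑ j, (v i - v j)^2
        = (n:ℝ) * (v i)^2 - (2 * (∑ j, v j)) * v i + ∑ j, (v j)^2 := by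
      intro i
      have h0 : ∀ j : Fin n, (v i - v j)^2 = (v i)^2 - 2 * v i * v j + (v j)^2 := by
        intro j; ring
      simp only [h0]
      rw [Finset.sum_add_distrib, Finset.sum_sub_distrib, Finset.sum_const,
        Finset.card_univ, Fintype.card_fin, ← Finset.mul_sum]
      push_cast
      ring
    simp only [hrow]
    rw [Finset.sum_add_distrib, Finset.sum_sub_distrib, Finset.sum_const,
      Finset.card_univ, Fintype.card_fin]
    have h1 : ∑ i, (n:ℝ) * (v i)^2 = (n:ℝ) * ∑ i, (v i)^2 := (Finset.mul_sum _ _ _).symm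
    have h2 : ∑ i, (2 * (∑ j, v j)) * v i = (2 * (∑ j, v j)) * ∑ i, v i :=
      (Finset.mul_sum _ _ _).symm
    rw [h1, h2]
    push_cast
    ring
  have hnm : (n:ℝ) * μ = ∑ i, v i := by
    rw [hμ]; field_simp
  have hTid : (n:ℝ) * T = (n:ℝ) * (∑ i, (v i)^2) - (∑ i, v i)^2 := by
    have hTexp : T = ∑ i, (v i)^2 - (2 * μ) * (∑ i, v i) + n * μ^2 := by
      rw [hT]
      have h0 : ∀ i : Fin n, (v i - μ)^2 = (v i)^2 - (2 * μ) * v i + μ^2 := by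
        intro i; ring
      simp only [h0]
      rw [Finset.sum_add_distrib, Finset.sum_sub_distrib, Finset.sum_const,
        Finset.card_univ, Fintype.card_fin, ← Finset.mul_sum]
      push_cast
      ring
    rw [hTexp]
    linear_combination ((n:ℝ) * μ - ∑ i, v i) * hnm
  have hSid : S = (n:ℝ) * T := by
    have h := hfull
    rw [hexp] at h
    rw [hTid]
    linarith
  have hSlb : δ * ρ^2 * n ≤ S := by
    rw [hSid]
    have h := mul_le_mul_of_nonneg_left hTlb.le hnR.le
    calc δ * ρ^2 * (n:ℝ) = (n:ℝ) * (δ * ρ^2) := by ring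
    _ ≤ (n:ℝ) * T := h
  have hsq : Real.sqrt (δ * ρ^2 * n) ≤ Real.sqrt S := Real.sqrt_le_sqrt hSlb
  have hval : Real.sqrt (δ * ρ^2 * n) = Real.sqrt δ * ρ * Real.sqrt n := by
    rw [show δ * ρ^2 * n = (Real.sqrt δ * ρ * Real.sqrt n)^2 by
      rw [mul_pow, mul_pow, Real.sq_sqrt hδ0.le, Real.sq_sqrt hnR.le]]
    exact Real.sqrt_sq (by positivity)
  have hδs : δ ≤ Real.sqrt δ := by
    have h1 : Real.sqrt δ ≤ 1 := by
      rw [← Real.sqrt_one]; exact Real.sqrt_le_sqrt hδ1.le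
    calc δ = Real.sqrt δ * Real.sqrt δ := (Real.mul_self_sqrt hδ0.le).symm
    _ ≤ Real.sqrt δ * 1 := mul_le_mul_of_nonneg_left h1 (Real.sqrt_nonneg δ)
    _ = Real.sqrt δ := mul_one _
  have h42 : (1:ℝ) ≤ 4 * Real.sqrt 2 := by
    have h1 : (1:ℝ) ≤ Real.sqrt 2 := by
      rw [show (1:ℝ) = Real.sqrt 1 by simp]
      exact Real.sqrt_le_sqrt one_le_two
    linarith
  have hfin : δ * ρ * Real.sqrt n / (4 * Real.sqrt 2) ≤ Real.sqrt δ * ρ * Real.sqrt n := by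
    have h1 : δ * ρ * Real.sqrt n / (4 * Real.sqrt 2) ≤ δ * ρ * Real.sqrt n :=
      div_le_self (by positivity) h42
    have h2 : δ * ρ * Real.sqrt n ≤ Real.sqrt δ * ρ * Real.sqrt n := by
      apply mul_le_mul_of_nonneg_right _ hsqrtn.le
      exact mul_le_mul_of_nonneg_right hδs hρ0.le
    linarith
  calc δ * ρ * Real.sqrt n / (4 * Real.sqrt 2) ≤ Real.sqrt δ * ρ * Real.sqrt n := hfin
  _ = Real.sqrt (δ * ρ^2 * n) := hval.symm
  _ ≤ Real.sqrt S := hsq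
end
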